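/- The CDF of a Cantor measure is invariant under Kronecker powers of the digit vector: F_{B} = F_{B^{⊗k}} for all positive integers k, where B^{⊗k} denotes the k-fold Kronecker product of B with itself (a digit vector for scale factor N^k). -/

import Mathlib

open MeasureTheory Set
open scoped ENNReal

/-- The `k`-fold Kronecker power of a digit set `D` with scale factor `N`:
`kronPow N D 0 = {0}` and `kronPow N D (k+1) = (kronPow N D k) ⊗ D`,
so that `kronPow N D 1 = D`. -/
def kronPow (N : ℕ) (D : Finset ℕ) : ℕ → Finset ℕ
  | 0 => {0}
  | k + 1 => Finset.image (fun p : ℕ × ℕ => p.2 + p.1 * N) ((kronPow N D k) ×ˢ D)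

lemma kronPow_subset_range (N : ℕ) (hN : 1 ≤ N) (D : Finset ℕ) (hD : D ⊆ Finset.range N) :
    ∀ k, kronPow N D k ⊆ Finset.range (N ^ k) := by
  intro k
  induction k with
  | zero => simp [kronPow]
  | succ k ih =>
    intro v hv
    simp only [kronPow, Finset.mem_image, Finset.mem_product] at hv
    obtain ⟨p, ⟨hp1, hp2⟩, rfl⟩ := hv
    have h1 := Finset.mem_range.1 (ih hp1)
    have h2 := Finset.mem_range.1 (hD hp2)
    have hpow : 1 ≤ N ^ k := Nat.one_le_pow _ _ hN
    have hmul : p.1 * N ≤ (N ^ k - 1) * N := Nat.mul_le_mul_right _ (by omega)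
    have : (N ^ k - 1) * N = N ^ k * N - N := by
      rw [Nat.sub_mul, one_mul]
    have hNN : N ≤ N ^ k * N := Nat.le_mul_of_pos_left _ hpow
    simp only [Finset.mem_range, pow_succ]
    omega

lemma kronPow_nonempty (N : ℕ) (D : Finset ℕ) (hDne : D.Nonempty) :
    ∀ k, (kronPow N D k).Nonempty := by
  intro k
  induction k with
  | zero => exact ⟨0, by simp [kronPow]⟩
  | succ k ih =>
    obtain ⟨e, he⟩ := ih
    obtain ⟨d, hd⟩ := hDne
    exact ⟨d + e * N, by
      simp only [kronPow, Finset.mem_image]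
      exact ⟨(e, d), Finset.mem_product.2 ⟨he, hd⟩, rfl⟩⟩

lemma kronPow_injOn (N : ℕ) (D : Finset ℕ) (hD : D ⊆ Finset.range N) (K : Finset ℕ) :
    ∀ p ∈ K ×ˢ D, ∀ q ∈ K ×ˢ D,
      (fun p : ℕ × ℕ => p.2 + p.1 * N) p = (fun p : ℕ × ℕ => p.2 + p.1 * N) q → p = q := by
  intro p hp q hq h
  simp only [Finset.mem_product] at hp hq
  have h2p := Finset.mem_range.1 (hD hp.2)
  have h2q := Finset.mem_range.1 (hD hq.2)
  have hNpos : 0 < N := by omega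
  have e1 : (p.2 + p.1 * N) % N = p.2 := by
    rw [Nat.add_mul_mod_self_right, Nat.mod_eq_of_lt h2p]
  have e2 : (q.2 + q.1 * N) % N = q.2 := by
    rw [Nat.add_mul_mod_self_right, Nat.mod_eq_of_lt h2q]
  have e3 : (p.2 + p.1 * N) / N = p.1 := by
    rw [Nat.add_mul_div_right _ _ hNpos, Nat.div_eq_of_lt h2p, zero_add]
  have e4 : (q.2 + q.1 * N) / N = q.1 := by
    rw [Nat.add_mul_div_right _ _ hNpos, Nat.div_eq_of_lt h2q, zero_add]
  simp only at h
  exact Prod.ext (by rw [← e3, ← e4, h]) (by rw [← e1, ← e2, h])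

lemma measure_map_finset_sum {ι : Type*} (s : Finset ι) (μ : ι → Measure ℝ) {f : ℝ → ℝ}
    (hf : Measurable f) :
    (∑ i ∈ s, μ i).map f = ∑ i ∈ s, (μ i).map f := by
  classical
  induction s using Finset.induction with
  | empty => simp
  | insert _ _ h ih =>
    rw [Finset.sum_insert h, Finset.sum_insert h, Measure.map_add _ _ hf, ih]

lemma mble_affine (e : ℕ) (M : ℝ) : Measurable fun x : ℝ => (x + (e : ℝ)) / M :=
  (measurable_id.add_const _).div_const _

lemma iterate_inv (N : ℕ) (hN : 3 ≤ N) (D : Finset ℕ) (hD : D ⊆ Finset.range N)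
    (μ : Measure ℝ)
    (hμinv : μ = (D.card : ℝ≥0∞)⁻¹ • ∑ d ∈ D, μ.map (fun x : ℝ => (x + (d : ℝ)) / N)) :
    ∀ k, μ = ((kronPow N D k).card : ℝ≥0∞)⁻¹ •
        ∑ d ∈ kronPow N D k, μ.map (fun x : ℝ => (x + (d : ℝ)) / (N ^ k : ℕ)) := by
  intro k
  have hNR : ((N : ℝ)) ≠ 0 := by positivity
  induction k with
  | zero =>
    simp only [kronPow, pow_zero, Nat.cast_one]
    have : (fun x : ℝ => (x + ((0:ℕ) : ℝ)) / (1:ℝ)) = id := by funext x; simp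
    simp [this, Measure.map_id]
  | succ k ih =>
    have hNkR : ((N : ℝ)) ^ k ≠ 0 := by positivity
    have step : ∀ e : ℕ, μ.map (fun x : ℝ => (x + (e : ℝ)) / (N ^ k : ℕ)) =
        (D.card : ℝ≥0∞)⁻¹ • ∑ d ∈ D,
          μ.map (fun x : ℝ => (x + ((d + e * N : ℕ) : ℝ)) / (N ^ (k+1) : ℕ)) := by
      intro e
      conv_lhs => rw [hμinv]
      rw [Measure.map_smul, measure_map_finset_sum _ _ (mble_affine e _)]
      congr 1
      refine Finset.sum_congr rfl fun d _ => ?_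
      rw [Measure.map_map (mble_affine e _) (mble_affine d _)]
      congr 1
      funext x
      rw [Function.comp_apply]
      push_cast
      field_simp
      ring
    calc μ = ((kronPow N D k).card : ℝ≥0∞)⁻¹ •
        ∑ e ∈ kronPow N D k, μ.map (fun x : ℝ => (x + (e : ℝ)) / (N ^ k : ℕ)) := ih
      _ = ((kronPow N D k).card : ℝ≥0∞)⁻¹ • ∑ e ∈ kronPow N D k,
            ((D.card : ℝ≥0∞)⁻¹ • ∑ d ∈ D,
              μ.map (fun x : ℝ => (x + ((d + e * N : ℕ) : ℝ)) / (N ^ (k+1) : ℕ))) := by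
          rw [Finset.sum_congr rfl fun e _ => step e]
      _ = (((kronPow N D k).card : ℝ≥0∞)⁻¹ * (D.card : ℝ≥0∞)⁻¹) •
            ∑ e ∈ kronPow N D k, ∑ d ∈ D,
              μ.map (fun x : ℝ => (x + ((d + e * N : ℕ) : ℝ)) / (N ^ (k+1) : ℕ)) := by
          rw [← Finset.smul_sum, smul_smul]
      _ = ((kronPow N D (k+1)).card : ℝ≥0∞)⁻¹ •
            ∑ d ∈ kronPow N D (k+1), μ.map (fun x : ℝ => (x + (d : ℝ)) / (N ^ (k+1) : ℕ)) := by
          have hinj := kronPow_injOn N D hD (kronPow N D k)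
          have hcard : (kronPow N D (k+1)).card = (kronPow N D k).card * D.card := by
            show (Finset.image _ _).card = _
            rw [Finset.card_image_of_injOn hinj, Finset.card_product]
          have hsum : ∑ d ∈ kronPow N D (k+1),
                μ.map (fun x : ℝ => (x + (d : ℝ)) / (N ^ (k+1) : ℕ))
              = ∑ e ∈ kronPow N D k, ∑ d ∈ D,
                  μ.map (fun x : ℝ => (x + ((d + e * N : ℕ) : ℝ)) / (N ^ (k+1) : ℕ)) := by
            show ∑ d ∈ Finset.image _ _, _ = _
            rw [Finset.sum_image hinj, Finset.sum_product]
          rw [hsum, hcard, Nat.cast_mul, ENNReal.mul_inv (by simp) (by simp)]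

lemma cdf_funEq (M : ℕ) (hM : 1 ≤ M) (E : Finset ℕ)
    (ρ : Measure ℝ) [IsProbabilityMeasure ρ] (hsupp : ρ (Icc 0 1) = 1)
    (hinv : ρ = ((E.card : ℝ≥0∞))⁻¹ • ∑ e ∈ E, ρ.map (fun x : ℝ => (x + (e : ℝ)) / (M : ℕ)))
    (x : ℝ) :
    (ρ (Icc 0 x)).toReal
      = (E.card : ℝ)⁻¹ * ∑ e ∈ E, (ρ (Icc 0 (min ((M : ℝ) * x - e) 1))).toReal := by
  have hMpos : (0 : ℝ) < M := by exact_mod_cast hM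
  have hnull : ρ (Icc (0:ℝ) 1)ᶜ = 0 := (prob_compl_eq_zero_iff measurableSet_Icc).2 hsupp
  have hpre : ∀ e : ℕ, (fun y : ℝ => (y + (e:ℝ)) / (M:ℝ)) ⁻¹' Icc 0 x
      = Icc (-(e:ℝ)) ((M:ℝ) * x - e) := by
    intro e
    ext y
    simp only [mem_preimage, mem_Icc]
    rw [le_div_iff₀ hMpos, div_le_iff₀ hMpos]
    constructor <;> (intro h; constructor <;> nlinarith [h.1, h.2])
  have key : ∀ e ∈ E, (ρ.map (fun y : ℝ => (y + (e:ℝ)) / (M:ℝ))) (Icc 0 x)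
      = ρ (Icc 0 (min ((M:ℝ) * x - e) 1)) := by
    intro e he
    rw [Measure.map_apply (mble_affine e _) measurableSet_Icc, hpre]
    rw [← measure_inter_conull (s := Icc (-(e:ℝ)) ((M:ℝ)*x - e)) hnull, Icc_inter_Icc]
    have h0 : -(e:ℝ) ⊔ 0 = 0 := sup_eq_right.2 (neg_nonpos.2 (Nat.cast_nonneg e))
    rw [h0]
  conv_lhs => rw [hinv]
  rw [Measure.smul_apply, Measure.finset_sum_apply, smul_eq_mul, ENNReal.toReal_mul,
    ENNReal.toReal_inv, ENNReal.toReal_natCast,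
    ENNReal.toReal_sum (fun e _ => measure_ne_top _ _)]
  congr 1
  exact Finset.sum_congr rfl fun e he => by rw [key e he]

lemma bddIntegrable (f : ℝ → ℝ) (hf : Measurable f) (C : ℝ) (hbd : ∀ x, |f x| ≤ C)
    (a b : ℝ) : IntervalIntegrable f volume a b := by
  rw [intervalIntegrable_iff]
  refine Integrable.mono' ((integrableOn_const_iff (C := C)).2 (Or.inr ?_)) hf.aestronglyMeasurable.restrict
    (ae_of_all _ fun x => hbd x)
  rw [uIoc]
  exact measure_Ioc_lt_top

theorem cdf_kron_power_invariant
    (N : ℕ) (hN : 3 ≤ N) (D : Finset ℕ) (hD : D ⊆ Finset.range N)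
    (hcard : 2 ≤ D.card) (hcard' : D.card ≤ N - 1)
    (k : ℕ) (hk : 1 ≤ k)
    (μ ν : Measure ℝ) [IsProbabilityMeasure μ] [IsProbabilityMeasure ν]
    (hμsupp : μ (Set.Icc 0 1) = 1)
    (hμinv : μ = (D.card : ℝ≥0∞)⁻¹ • ∑ d ∈ D, μ.map (fun x : ℝ => (x + (d : ℝ)) / N))
    (hνsupp : ν (Set.Icc 0 1) = 1)
    (hνinv : ν = ((kronPow N D k).card : ℝ≥0∞)⁻¹ •
        ∑ d ∈ kronPow N D k, ν.map (fun x : ℝ => (x + (d : ℝ)) / (N ^ k : ℕ))) :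
    ∀ x : ℝ, (μ (Set.Icc 0 x)).toReal = (ν (Set.Icc 0 x)).toReal := by
  classical
  have hDne : D.Nonempty := Finset.card_pos.1 (by omega)
  set E : Finset ℕ := kronPow N D k with hEdef
  have hEne : E.Nonempty := kronPow_nonempty N D hDne k
  have hmpos : 0 < E.card := Finset.card_pos.2 hEne
  have hE : E ⊆ Finset.range (N ^ k) := kronPow_subset_range N (by omega) D hD k
  have hMk : 1 ≤ N ^ k := Nat.one_le_pow _ _ (by omega)
  have hM3 : 3 ≤ N ^ k := le_trans hN (by calc N = N ^ 1 := (pow_one N).symm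
    _ ≤ N ^ k := Nat.pow_le_pow_right (by omega) hk)
  have hM3R : (3 : ℝ) ≤ ((N ^ k : ℕ) : ℝ) := by exact_mod_cast hM3
  have hMposR : (0 : ℝ) < ((N ^ k : ℕ) : ℝ) := by linarith
  have hμk := iterate_inv N hN D hD μ hμinv k
  -- the two CDFs
  set F : Measure ℝ → ℝ → ℝ := fun ρ y => (ρ (Icc 0 y)).toReal with hFdef
  have hFmono : ∀ (ρ : Measure ℝ) [IsProbabilityMeasure ρ], Monotone (F ρ) := by
    intro ρ _
    intro a b hab
    exact ENNReal.toReal_mono (measure_ne_top _ _) (measure_mono (Icc_subset_Icc_right hab))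
  have hFmeas : ∀ (ρ : Measure ℝ) [IsProbabilityMeasure ρ], Measurable (F ρ) := by
    intro ρ _
    exact (hFmono ρ).measurable
  have hF01 : ∀ (ρ : Measure ℝ) [IsProbabilityMeasure ρ], ∀ y, 0 ≤ F ρ y ∧ F ρ y ≤ 1 := by
    intro ρ _ y
    exact ⟨ENNReal.toReal_nonneg, ENNReal.toReal_mono ENNReal.one_ne_top prob_le_one⟩
  have hFneg : ∀ (ρ : Measure ℝ), ∀ y : ℝ, y < 0 → F ρ y = 0 := by
    intro ρ y hy
    simp only [hFdef]
    rw [Icc_eq_empty (fun h => absurd (lt_of_le_of_lt h hy) (lt_irrefl _)), measure_empty]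
    simp
  have hFone : ∀ (ρ : Measure ℝ) [IsProbabilityMeasure ρ], ρ (Icc 0 1) = 1 →
      ∀ y : ℝ, 1 ≤ y → ρ (Icc 0 y) = 1 := by
    intro ρ _ hs y hy
    refine le_antisymm prob_le_one ?_
    calc (1 : ℝ≥0∞) = ρ (Icc 0 1) := hs.symm
      _ ≤ ρ (Icc 0 y) := measure_mono (Icc_subset_Icc_right hy)
  -- functional equations
  have feqμ := cdf_funEq (N ^ k) hMk E μ hμsupp hμk
  have feqν := cdf_funEq (N ^ k) hMk E ν hνsupp hνinv
  -- g and h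
  set g : ℝ → ℝ := fun y => |F μ y - F ν y| with hgdef
  set h : ℝ → ℝ := fun t => g (min t 1) with hhdef
  have hgmeas : Measurable g := ((hFmeas μ).sub (hFmeas ν)).abs
  have hhmeas : Measurable h := hgmeas.comp (measurable_id.min measurable_const)
  have hgbd : ∀ y, |g y| ≤ 1 := by
    intro y
    have h1 := hF01 μ y
    have h2 := hF01 ν y
    rw [hgdef, abs_abs]
    rw [abs_le]
    constructor <;> [linarith [h1.1, h1.2, h2.1, h2.2]; linarith [h1.1, h1.2, h2.1, h2.2]]
  have hhbd : ∀ y, |h y| ≤ 1 := fun y => hgbd _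
  have hg1 : g 1 = 0 := by
    simp only [hgdef, hFdef]
    rw [hFone μ hμsupp 1 le_rfl, hFone ν hνsupp 1 le_rfl]
    simp
  have hgneg : ∀ y : ℝ, y < 0 → g y = 0 := by
    intro y hy
    simp only [hgdef]
    rw [hFneg μ y hy, hFneg ν y hy]
    simp
  -- pointwise functional inequality
  have hpt : ∀ x : ℝ, g x ≤ (E.card : ℝ)⁻¹ * ∑ e ∈ E, h (((N ^ k : ℕ) : ℝ) * x - e) := by
    intro x
    have : F μ x - F ν x = (E.card : ℝ)⁻¹ *
        ∑ e ∈ E, (F μ (min (((N ^ k : ℕ) : ℝ) * x - e) 1)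
          - F ν (min (((N ^ k : ℕ) : ℝ) * x - e) 1)) := by
      rw [Finset.sum_sub_distrib, mul_sub]
      simp only [hFdef]
      rw [← feqμ x, ← feqν x]
    calc g x = |F μ x - F ν x| := rfl
      _ = |(E.card : ℝ)⁻¹| * |∑ e ∈ E, (F μ (min (((N ^ k : ℕ) : ℝ) * x - e) 1)
          - F ν (min (((N ^ k : ℕ) : ℝ) * x - e) 1))| := by rw [this, abs_mul]
      _ ≤ (E.card : ℝ)⁻¹ * ∑ e ∈ E, |F μ (min (((N ^ k : ℕ) : ℝ) * x - e) 1)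
          - F ν (min (((N ^ k : ℕ) : ℝ) * x - e) 1)| := by
          rw [abs_of_nonneg (show (0:ℝ) ≤ (E.card : ℝ)⁻¹ from inv_nonneg.2 (Nat.cast_nonneg _))]
          exact mul_le_mul_of_nonneg_left (Finset.abs_sum_le_sum_abs _ _) (inv_nonneg.2 (Nat.cast_nonneg _))
      _ = (E.card : ℝ)⁻¹ * ∑ e ∈ E, h (((N ^ k : ℕ) : ℝ) * x - e) := rfl
  -- the integral
  set I : ℝ := ∫ t in (0:ℝ)..1, h t with hIdef
  have hIint : ∀ a b : ℝ, IntervalIntegrable h volume a b := bddIntegrable h hhmeas 1 hhbd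
  have hI0 : 0 ≤ I := intervalIntegral.integral_nonneg zero_le_one (fun u _ => abs_nonneg _)
  -- each substituted integral
  have hsub : ∀ e ∈ E, (∫ x in (0:ℝ)..1, h (((N ^ k : ℕ) : ℝ) * x - e))
      = (((N ^ k : ℕ) : ℝ))⁻¹ * I := by
    intro e he
    have heM := Finset.mem_range.1 (hE he)
    have heM' : (e : ℝ) + 1 ≤ ((N ^ k : ℕ) : ℝ) := by exact_mod_cast heM
    rw [intervalIntegral.integral_comp_mul_sub h (ne_of_gt hMposR) (e : ℝ), smul_eq_mul]
    congr 1
    rw [show ((N ^ k : ℕ) : ℝ) * 0 - e = -(e:ℝ) by ring,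
        show ((N ^ k : ℕ) : ℝ) * 1 - e = ((N ^ k : ℕ) : ℝ) - e by ring]
    have hs1 : (∫ t in (-(e:ℝ))..0, h t) = 0 := by
      have hz : (∫ t in (-(e:ℝ))..0, h t) = ∫ t in (-(e:ℝ))..0, (0:ℝ) := by
        apply intervalIntegral.integral_congr_ae
        have hne : ∀ᵐ t : ℝ, t ≠ (0:ℝ) := by
          rw [ae_iff]
          have : {t : ℝ | ¬ t ≠ 0} = {0} := by ext t; simp
          rw [this]
          exact Real.volume_singleton
        filter_upwards [hne] with t ht hmem
        rw [uIoc_of_le (neg_nonpos.2 (Nat.cast_nonneg e))] at hmem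
        have ht0 : t < 0 := lt_of_le_of_ne hmem.2 ht
        show g (min t 1) = 0
        rw [min_eq_left (by linarith)]
        exact hgneg t ht0
      rw [hz, intervalIntegral.integral_zero]
    have hs3 : (∫ t in (1:ℝ)..(((N ^ k : ℕ) : ℝ) - e), h t) = 0 := by
      have hz : (∫ t in (1:ℝ)..(((N ^ k : ℕ) : ℝ) - e), h t)
          = ∫ t in (1:ℝ)..(((N ^ k : ℕ) : ℝ) - e), (0:ℝ) := by
        apply intervalIntegral.integral_congr
        intro t ht
        rw [uIcc_of_le (by linarith)] at ht
        show g (min t 1) = 0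
        rw [min_eq_right ht.1]
        exact hg1
      rw [hz, intervalIntegral.integral_zero]
    have hsplit1 := intervalIntegral.integral_add_adjacent_intervals
      (hIint (-(e:ℝ)) 0) (hIint 0 1)
    have hsplit2 := intervalIntegral.integral_add_adjacent_intervals
      (hIint (-(e:ℝ)) 1) (hIint 1 (((N ^ k : ℕ) : ℝ) - e))
    rw [← hsplit2, ← hsplit1, hs1, hs3, hIdef]
    ring
  -- contraction
  have hcomp : ∀ e : ℕ, IntervalIntegrable (fun x => h (((N ^ k : ℕ) : ℝ) * x - e))
      volume 0 1 := by
    intro e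
    exact bddIntegrable _ (hhmeas.comp ((measurable_id.const_mul _).sub_const _)) 1
      (fun x => hhbd _) 0 1
  have hRHSint : IntervalIntegrable
      (fun x => (E.card : ℝ)⁻¹ * ∑ e ∈ E, h (((N ^ k : ℕ) : ℝ) * x - e)) volume 0 1 := by
    refine bddIntegrable _ ?_ ((E.card : ℝ)⁻¹ * E.card) ?_ 0 1
    · exact measurable_const.mul (Finset.measurable_sum E (fun e _ =>
        hhmeas.comp ((measurable_id.const_mul _).sub_const _)))
    · intro x
      rw [abs_mul, abs_of_nonneg (show (0:ℝ) ≤ (E.card : ℝ)⁻¹ from inv_nonneg.2 (Nat.cast_nonneg _))]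
      refine mul_le_mul_of_nonneg_left ?_ (inv_nonneg.2 (Nat.cast_nonneg _))
      calc |∑ e ∈ E, h (((N ^ k : ℕ) : ℝ) * x - e)|
          ≤ ∑ e ∈ E, |h (((N ^ k : ℕ) : ℝ) * x - e)| := Finset.abs_sum_le_sum_abs _ _
        _ ≤ ∑ _e ∈ E, (1:ℝ) := Finset.sum_le_sum fun e _ => hhbd _
        _ = (E.card : ℝ) := by rw [Finset.sum_const, nsmul_eq_mul, mul_one]
  have hgint : ∀ a b : ℝ, IntervalIntegrable g volume a b := bddIntegrable g hgmeas 1 hgbd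
  have hIeqJ : (∫ t in (0:ℝ)..1, g t) = I := by
    apply intervalIntegral.integral_congr
    intro t ht
    rw [uIcc_of_le zero_le_one] at ht
    show g t = g (min t 1)
    rw [min_eq_left ht.2]
  have hcontr : I ≤ (((N ^ k : ℕ) : ℝ))⁻¹ * I := by
    calc I = ∫ t in (0:ℝ)..1, g t := hIeqJ.symm
      _ ≤ ∫ x in (0:ℝ)..1, ((E.card : ℝ)⁻¹ * ∑ e ∈ E, h (((N ^ k : ℕ) : ℝ) * x - e)) :=
          intervalIntegral.integral_mono_on zero_le_one (hgint 0 1) hRHSint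
            (fun x _ => hpt x)
      _ = (E.card : ℝ)⁻¹ * ∑ e ∈ E, ∫ x in (0:ℝ)..1, h (((N ^ k : ℕ) : ℝ) * x - e) := by
          rw [intervalIntegral.integral_const_mul,
            intervalIntegral.integral_finset_sum (fun e _ => hcomp e)]
      _ = (E.card : ℝ)⁻¹ * ∑ e ∈ E, (((N ^ k : ℕ) : ℝ))⁻¹ * I := by
          rw [Finset.sum_congr rfl hsub]
      _ = (E.card : ℝ)⁻¹ * (E.card : ℝ) * ((((N ^ k : ℕ) : ℝ))⁻¹ * I) := by
          rw [Finset.sum_const, nsmul_eq_mul]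
          ring
      _ = (((N ^ k : ℕ) : ℝ))⁻¹ * I := by
          rw [inv_mul_cancel₀ (by exact_mod_cast hmpos.ne')]
          ring
  have hIzero : I = 0 := by
    by_contra hne
    have hIpos : 0 < I := lt_of_le_of_ne hI0 (Ne.symm hne)
    have : ((N ^ k : ℕ) : ℝ) * I ≤ I := by
      have := mul_le_mul_of_nonneg_left hcontr (le_of_lt hMposR)
      rwa [← mul_assoc, mul_inv_cancel₀ (ne_of_gt hMposR), one_mul] at this
    nlinarith
  -- g vanishes a.e. on Ioc 0 1
  have hgae : g =ᵐ[volume.restrict (Ioc (0:ℝ) 1)] 0 := by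
    have hint : Integrable g (volume.restrict (Ioc (0:ℝ) 1)) := by
      have := hgint 0 1
      rwa [intervalIntegrable_iff_integrableOn_Ioc_of_le zero_le_one] at this
    refine (integral_eq_zero_iff_of_nonneg (fun y => abs_nonneg _) hint).1 ?_
    have : (∫ t in (0:ℝ)..1, g t) = ∫ t in Ioc (0:ℝ) 1, g t :=
      intervalIntegral.integral_of_le zero_le_one
    rw [← this, hIeqJ, hIzero]
  have hZmeas : MeasurableSet {y : ℝ | g y ≠ 0} :=
    (hgmeas (measurableSet_singleton 0)).compl
  have hZ : volume ({y : ℝ | g y ≠ 0} ∩ Ioc (0:ℝ) 1) = 0 := by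
    have h1 : ∀ᵐ y ∂(volume.restrict (Ioc (0:ℝ) 1)), g y = 0 := by
      filter_upwards [hgae] with y hy using hy
    rw [ae_iff] at h1
    have h2 : {a : ℝ | ¬ g a = 0} = {y : ℝ | g y ≠ 0} := rfl
    rw [h2, Measure.restrict_apply hZmeas] at h1
    exact h1
  -- conclusion
  intro x
  rcases lt_or_ge x 0 with hx | hx
  · rw [show Icc (0:ℝ) x = ∅ from Icc_eq_empty (fun hc => absurd (lt_of_le_of_lt hc hx)
      (lt_irrefl _))]
    simp
  rcases le_or_gt 1 x with hx1 | hx1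
  · rw [hFone μ hμsupp x hx1, hFone ν hνsupp x hx1]
  -- 0 ≤ x < 1 : approximation from the right
  have hy : ∀ n : ℕ, ∃ yn : ℝ, x < yn ∧ yn ≤ 1 ∧ yn < x + 1/(n+1) ∧ g yn = 0 := by
    intro n
    have hb1 : x < x + 1/((n:ℝ)+1) := by
      have : (0:ℝ) < 1/((n:ℝ)+1) := by positivity
      linarith
    have hxb : x < min (x + 1/((n:ℝ)+1)) 1 := lt_min hb1 hx1
    have hvol : volume (Ioo x (min (x + 1/((n:ℝ)+1)) 1)) ≠ 0 := by
      rw [Real.volume_Ioo]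
      simp only [ne_eq, ENNReal.ofReal_eq_zero, not_le]
      linarith
    obtain ⟨yn, hyn⟩ := nonempty_of_measure_ne_zero (s := Ioo x (min (x + 1/((n:ℝ)+1)) 1)
      \ ({y : ℝ | g y ≠ 0} ∩ Ioc (0:ℝ) 1)) (by rw [measure_diff_null hZ]; exact hvol)
    obtain ⟨⟨hy1, hy2⟩, hy3⟩ := hyn
    have hyn1 : yn ≤ 1 := le_of_lt (lt_of_lt_of_le hy2 (min_le_right _ _))
    have hynIoc : yn ∈ Ioc (0:ℝ) 1 := ⟨lt_of_le_of_lt hx hy1, hyn1⟩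
    have hgyn : g yn = 0 := by
      by_contra hc
      exact hy3 ⟨hc, hynIoc⟩
    exact ⟨yn, hy1, hyn1, lt_of_lt_of_le hy2 (min_le_left _ _), hgyn⟩
  choose y hy1 hy2 hy3 hy4 using hy
  set Y : ℕ → ℝ := fun n => (Finset.range (n+1)).inf' Finset.nonempty_range_add_one y with hYdef
  have hYex : ∀ n, ∃ i, Y n = y i := by
    intro n
    obtain ⟨i, _, hi⟩ := Finset.exists_mem_eq_inf' (Finset.nonempty_range_add_one
      (n := n)) y
    exact ⟨i, hi⟩
  have hYgt : ∀ n, x < Y n := by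
    intro n
    obtain ⟨i, hi⟩ := hYex n
    rw [hi]; exact hy1 i
  have hYle : ∀ n, Y n ≤ y n := fun n =>
    Finset.inf'_le _ (Finset.self_mem_range_succ n)
  have hYanti : Antitone fun n => Icc (0:ℝ) (Y n) := by
    intro a b hab
    apply Icc_subset_Icc_right
    exact Finset.inf'_mono y (Finset.range_subset_range.2 (by omega)) _
  have hInter : ⋂ n, Icc (0:ℝ) (Y n) = Icc 0 x := by
    ext z
    simp only [mem_iInter, mem_Icc]
    constructor
    · intro hz
      refine ⟨(hz 0).1, ?_⟩
      by_contra hzx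
      push_neg at hzx
      obtain ⟨n, hn⟩ := exists_nat_one_div_lt (show (0:ℝ) < z - x by linarith)
      have h1 := (hz n).2
      have h2 := hYle n
      have h3 := hy3 n
      linarith
    · rintro ⟨h0, hzx⟩ n
      exact ⟨h0, le_trans hzx (le_of_lt (hYgt n))⟩
  have heq : ∀ n, μ (Icc 0 (Y n)) = ν (Icc 0 (Y n)) := by
    intro n
    obtain ⟨i, hi⟩ := hYex n
    have := hy4 i
    rw [hgdef] at this
    have hsub : F μ (y i) = F ν (y i) := by
      have := abs_eq_zero.1 this
      linarith [sub_eq_zero.1 this]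
    rw [hi]
    exact (ENNReal.toReal_eq_toReal_iff' (measure_ne_top _ _) (measure_ne_top _ _)).1 hsub
  have ht1 := tendsto_measure_iInter_atTop (μ := μ) (s := fun n => Icc (0:ℝ) (Y n))
    (fun n => measurableSet_Icc.nullMeasurableSet) hYanti ⟨0, measure_ne_top _ _⟩
  have ht2 := tendsto_measure_iInter_atTop (μ := ν) (s := fun n => Icc (0:ℝ) (Y n))
    (fun n => measurableSet_Icc.nullMeasurableSet) hYanti ⟨0, measure_ne_top _ _⟩
  rw [hInter] at ht1 ht2
  have ht1' : Filter.Tendsto (fun n => μ (Icc (0:ℝ) (Y n))) Filter.atTop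
      (nhds (ν (Icc 0 x))) := by
    have : (fun n => μ (Icc (0:ℝ) (Y n))) = fun n => ν (Icc (0:ℝ) (Y n)) := by
      funext n; exact heq n
    rw [this]
    exact ht2
  have := tendsto_nhds_unique ht1 ht1'
  rw [this]
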